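/- For any dual-feasible (λ, σ) and any primal-feasible impulse set {v_{kj}} (with t_{kj} ∈ T_k), equality of the dual objective and primal cost, λᵀb − Σₖ ΔV_kσ_k = Σₖ Σⱼ f_k(v_{kj}), implies: (i) every impulse occurs at a time where the dual norm constraint is active and aligned, i.e., v_{kj}ᵀ M_k(t_{kj}) λ = (1+σ_k) f_k(v_{kj}) for all k, j, and (ii) σ_k (Σⱼ f_k(v_{kj}) − ΔV_k) = 0 for all k. -/

import Mathlib

open scoped BigOperators

/-- Dual norm: `f°(y) = sup {xᵀy : f(x) ≤ 1}`. -/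
noncomputable def dualNorm {n : ℕ} (f : (Fin n → ℝ) → ℝ) (y : Fin n → ℝ) : ℝ :=
  sSup ((fun x : Fin n → ℝ => ∑ i, x i * y i) '' {x | f x ≤ 1})


theorem strong_duality_alignment
    {nx nu N : ℕ}
    (b : Fin nx → ℝ)
    (T : Fin N → Set ℝ)
    (M : Fin N → ℝ → Matrix (Fin nu) (Fin nx) ℝ)
    (f : Fin N → ((Fin nu → ℝ) → ℝ))
    (hnonneg : ∀ k u, 0 ≤ f k u)
    (hdef : ∀ k u, f k u = 0 ↔ u = 0)
    (hhom : ∀ k (α : ℝ), 0 ≤ α → ∀ u, f k (α • u) = α * f k u)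
    (htri : ∀ k u₁ u₂, f k (u₁ + u₂) ≤ f k u₁ + f k u₂)
    -- Hölder inequality for each norm and its dual
    (hHolder : ∀ k (v y : Fin nu → ℝ),
      ∑ i, v i * y i ≤ f k v * dualNorm (f k) y)
    (ΔV : Fin N → ℝ) (hΔV : ∀ k, 0 ≤ ΔV k)
    -- dual-feasible point
    (lam : Fin nx → ℝ) (σ : Fin N → ℝ) (hσ : ∀ k, 0 ≤ σ k)
    (hdual : ∀ k, ∀ t ∈ T k,
      dualNorm (f k) ((M k t).mulVec lam) ≤ 1 + σ k)
    -- primal-feasible impulse set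
    (m : Fin N → ℕ)
    (t : (k : Fin N) → Fin (m k) → ℝ) (ht : ∀ k j, t k j ∈ T k)
    (v : (k : Fin N) → Fin (m k) → (Fin nu → ℝ))
    (hbudget : ∀ k, ∑ j, f k (v k j) ≤ ΔV k)
    (hb : b = ∑ k, ∑ j, (M k (t k j)).transpose.mulVec (v k j))
    -- equality of dual objective and primal cost
    (heq : (∑ i, lam i * b i) - ∑ k, ΔV k * σ k = ∑ k, ∑ j, f k (v k j)) :
    (∀ k j, ∑ i, v k j i * (M k (t k j)).mulVec lam i =
      (1 + σ k) * f k (v k j)) ∧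
    (∀ k, σ k * ((∑ j, f k (v k j)) - ΔV k) = 0) := by
  -- per-term Hölder + dual feasibility bound
  have hac : ∀ k j, ∑ i, v k j i * (M k (t k j)).mulVec lam i ≤
      (1 + σ k) * f k (v k j) := by
    intro k j
    calc ∑ i, v k j i * (M k (t k j)).mulVec lam i
        ≤ f k (v k j) * dualNorm (f k) ((M k (t k j)).mulVec lam) :=
          hHolder k _ _
      _ ≤ f k (v k j) * (1 + σ k) :=
          mul_le_mul_of_nonneg_left (hdual k _ (ht k j)) (hnonneg k _)
      _ = (1 + σ k) * f k (v k j) := mul_comm _ _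
  -- λᵀ b equals the double sum of alignments
  have hsum : ∑ i, lam i * b i =
      ∑ k, ∑ j, ∑ i, v k j i * (M k (t k j)).mulVec lam i := by
    subst hb
    simp only [Finset.sum_apply, Finset.mul_sum]
    rw [Finset.sum_comm]
    refine Finset.sum_congr rfl fun k _ => ?_
    rw [Finset.sum_comm]
    refine Finset.sum_congr rfl fun j _ => ?_
    simp only [Matrix.mulVec, dotProduct, Matrix.transpose_apply,
      Finset.mul_sum, Finset.sum_mul]
    rw [Finset.sum_comm]
    exact Finset.sum_congr rfl fun i _ => Finset.sum_congr rfl fun l _ => by ring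
  set a : (k : Fin N) → Fin (m k) → ℝ :=
    fun k j => ∑ i, v k j i * (M k (t k j)).mulVec lam i with ha
  -- key: the two slack sums add to zero
  have key : (∑ k, ∑ j, ((1 + σ k) * f k (v k j) - a k j)) +
      (∑ k, σ k * (ΔV k - ∑ j, f k (v k j))) = 0 := by
    have h1 : ∑ k, ∑ j, (1 + σ k) * f k (v k j) =
        (∑ k, ∑ j, f k (v k j)) + ∑ k, σ k * ∑ j, f k (v k j) := by
      rw [← Finset.sum_add_distrib]
      refine Finset.sum_congr rfl fun k _ => ?_
      rw [Finset.mul_sum, ← Finset.sum_add_distrib]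
      exact Finset.sum_congr rfl fun j _ => by ring
    have h2 : ∑ k, ∑ j, ((1 + σ k) * f k (v k j) - a k j) =
        (∑ k, ∑ j, (1 + σ k) * f k (v k j)) - ∑ k, ∑ j, a k j := by
      rw [← Finset.sum_sub_distrib]
      exact Finset.sum_congr rfl fun k _ => Finset.sum_sub_distrib _ _
    have h3 : ∑ k, σ k * (ΔV k - ∑ j, f k (v k j)) =
        (∑ k, ΔV k * σ k) - ∑ k, σ k * ∑ j, f k (v k j) := by
      rw [← Finset.sum_sub_distrib]
      exact Finset.sum_congr rfl fun k _ => by ring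
    rw [h2, h3, h1, ← hsum]
    linarith [heq]
  have hnn1 : ∀ k ∈ Finset.univ (α := Fin N),
      0 ≤ ∑ j, ((1 + σ k) * f k (v k j) - a k j) := fun k _ =>
    Finset.sum_nonneg fun j _ => sub_nonneg.2 (hac k j)
  have hnn2 : ∀ k ∈ Finset.univ (α := Fin N),
      0 ≤ σ k * (ΔV k - ∑ j, f k (v k j)) := fun k _ =>
    mul_nonneg (hσ k) (sub_nonneg.2 (hbudget k))
  have hS1 : ∑ k, ∑ j, ((1 + σ k) * f k (v k j) - a k j) = 0 := by
    have := Finset.sum_nonneg hnn1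
    have := Finset.sum_nonneg hnn2
    linarith
  have hS2 : ∑ k, σ k * (ΔV k - ∑ j, f k (v k j)) = 0 := by
    have := Finset.sum_nonneg hnn1
    have := Finset.sum_nonneg hnn2
    linarith
  constructor
  · intro k j
    have hk := (Finset.sum_eq_zero_iff_of_nonneg hnn1).1 hS1 k (Finset.mem_univ k)
    have hj := (Finset.sum_eq_zero_iff_of_nonneg
      (fun j _ => sub_nonneg.2 (hac k j))).1 hk j (Finset.mem_univ j)
    have := sub_eq_zero.1 hj
    linarith
  · intro k
    have hk := (Finset.sum_eq_zero_iff_of_nonneg hnn2).1 hS2 k (Finset.mem_univ k)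
    nlinarith [hk]
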